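/- Let k ∈ ℕ and θ ∈ [0,1]. There exists a constant c = c(k,θ) > 0 such that for every g ∈ C^{k,θ}(ℝ), the convolution K∗g belongs to C^{k+1,θ}(ℝ), its first derivative satisfies (K∗g)′ = G₂∗g − g everywhere on ℝ, and ‖K∗g‖_{C^{k+1,θ}} ≤ c·‖g‖_{C^{k,θ}}. -/

import Mathlib

open MeasureTheory Real
open scoped ENNReal NNReal

/-- The supremum norm `‖f‖_∞ = sup_x |f(x)|` (as a real-valued junk-tolerant `iSup`). -/
noncomputable def supNorm (f : ℝ → ℝ) : ℝ := ⨆ x : ℝ, |f x|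

/-- The Hölder seminorm `sup_{h ≠ 0} sup_x |f⁽ᵏ⁾(x+h) - f⁽ᵏ⁾(x)| / |h|^θ`. -/
noncomputable def holderSeminorm (k : ℕ) (θ : ℝ) (f : ℝ → ℝ) : ℝ :=
  ⨆ h : {h : ℝ // h ≠ 0}, ⨆ x : ℝ,
    |iteratedDeriv k f (x + ↑h) - iteratedDeriv k f x| / |(h : ℝ)| ^ θ

/-- The `C^{k,θ}` norm `‖f‖_{C^{k,θ}} = Σ_{j=0}^k ‖f⁽ʲ⁾‖_∞ + [f⁽ᵏ⁾]_θ`. -/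
noncomputable def holderNorm (k : ℕ) (θ : ℝ) (f : ℝ → ℝ) : ℝ :=
  (∑ j ∈ Finset.range (k + 1), supNorm (iteratedDeriv j f)) + holderSeminorm k θ f

/-- Membership in the Hölder class `C^{k,θ}(ℝ)`: `f` is `k` times continuously
differentiable, all derivatives up to order `k` are bounded, and the `k`-th derivative is
`θ`-Hölder continuous. -/
def MemHolderClass (k : ℕ) (θ : ℝ) (f : ℝ → ℝ) : Prop :=
  ContDiff ℝ (k : ℕ∞) f ∧
  (∀ j ≤ k, ∃ C : ℝ, ∀ x : ℝ, |iteratedDeriv j f x| ≤ C) ∧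
  (∃ C : ℝ, ∀ x y : ℝ, |iteratedDeriv k f x - iteratedDeriv k f y| ≤ C * |x - y| ^ θ)

/-- The kernel `K(x) = -sgn(x) e^{-|x|}/2`, the derivative of the Green's function
`G₂(x) = e^{-|x|}/2` of `1 - d²/dx²` on `ℝ`. -/
noncomputable def bbmK (x : ℝ) : ℝ := -Real.sign x * Real.exp (-|x|) / 2

/-- The Green's function `G₂(x) = e^{-|x|}/2` of `1 - d²/dx²` on `ℝ`. -/
noncomputable def bbmG₂ (x : ℝ) : ℝ := Real.exp (-|x|) / 2

section BBMAux
open Set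


lemma measurable_sign' : Measurable Real.sign := by
  have h : Real.sign = fun r : ℝ => if r < 0 then (-1:ℝ) else if 0 < r then 1 else 0 :=
    funext fun r => rfl
  rw [h]
  exact Measurable.ite (measurableSet_lt measurable_id measurable_const) measurable_const
    (Measurable.ite (measurableSet_lt measurable_const measurable_id) measurable_const
      measurable_const)

lemma continuous_bbmG₂ : Continuous bbmG₂ :=
  ((Real.continuous_exp.comp continuous_abs.neg).div_const 2)

lemma measurable_bbmK : Measurable bbmK :=
  ((measurable_sign'.neg.mul (Real.continuous_exp.comp continuous_abs.neg).measurable).div_const 2)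

lemma bbmG₂_nonneg (x : ℝ) : 0 ≤ bbmG₂ x := by
  unfold bbmG₂; positivity

lemma abs_bbmK_le (x : ℝ) : |bbmK x| ≤ bbmG₂ x := by
  unfold bbmK bbmG₂
  rw [abs_div, abs_mul, abs_neg]
  have h1 : |Real.sign x| ≤ 1 := by
    rcases Real.sign_apply_eq x with h | h | h <;> rw [h] <;> norm_num
  have h2 : |Real.exp (-|x|)| = Real.exp (-|x|) := abs_of_pos (Real.exp_pos _)
  rw [h2]
  have : |(2:ℝ)| = 2 := by norm_num
  rw [this]
  have := mul_le_mul_of_nonneg_right h1 (Real.exp_pos (-|x|)).le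
  rw [one_mul] at this
  linarith

lemma integrable_bbmG₂ : Integrable bbmG₂ := by
  have h : Integrable (fun x : ℝ => Real.exp (-|x|)) := by
    rw [← integrableOn_univ, ← Set.Iic_union_Ioi (a := (0:ℝ))]
    refine IntegrableOn.union ?_ ?_
    · exact (integrableOn_exp_Iic 0).congr_fun
        (fun x hx => by rw [abs_of_nonpos hx, neg_neg]) measurableSet_Iic
    · exact ((exp_neg_integrableOn_Ioi 0 one_pos).congr_fun
        (fun x hx => by rw [abs_of_pos hx]; ring_nf) measurableSet_Ioi)
  exact h.div_const 2

lemma integrable_bbmK : Integrable bbmK := by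
  refine integrable_bbmG₂.mono' measurable_bbmK.aestronglyMeasurable ?_
  exact Filter.Eventually.of_forall fun x => by
    rw [Real.norm_eq_abs]; exact abs_bbmK_le x

lemma integral_bbmG₂ : ∫ y : ℝ, bbmG₂ y = 1 := by
  unfold bbmG₂
  rw [integral_div, integral_comp_abs (f := fun x => Real.exp (-x)), integral_exp_neg_Ioi_zero]
  norm_num

section KernelBounds

variable {Kf g : ℝ → ℝ} {M : ℝ}

lemma integrable_kernel_mul (hKm : Measurable Kf) (hKb : ∀ y, |Kf y| ≤ bbmG₂ y)
    (hg : Continuous g) (hM : ∀ x, |g x| ≤ M) (x : ℝ) :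
    Integrable (fun y => Kf y * g (x - y)) := by
  refine (integrable_bbmG₂.mul_const M).mono'
    (hKm.aestronglyMeasurable.mul
      ((hg.comp (continuous_const.sub continuous_id)).aestronglyMeasurable)) ?_
  refine Filter.Eventually.of_forall fun y => ?_
  rw [Real.norm_eq_abs, abs_mul]
  exact mul_le_mul (hKb y) (hM _) (abs_nonneg _) (bbmG₂_nonneg y)

lemma abs_integral_kernel_mul (hKm : Measurable Kf) (hKb : ∀ y, |Kf y| ≤ bbmG₂ y)
    (hg : Continuous g) (hM : ∀ x, |g x| ≤ M) (x : ℝ) :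
    |∫ y : ℝ, Kf y * g (x - y)| ≤ M := by
  have h : ‖∫ y : ℝ, Kf y * g (x - y)‖ ≤ ∫ y : ℝ, bbmG₂ y * M :=
    norm_integral_le_of_norm_le (integrable_bbmG₂.mul_const M)
      (Filter.Eventually.of_forall fun y => by
        rw [Real.norm_eq_abs, abs_mul]
        exact mul_le_mul (hKb y) (hM _) (abs_nonneg _) (bbmG₂_nonneg y))
  rw [Real.norm_eq_abs] at h
  calc |∫ y : ℝ, Kf y * g (x - y)| ≤ ∫ y : ℝ, bbmG₂ y * M := h
    _ = (∫ y : ℝ, bbmG₂ y) * M := by rw [integral_mul_const]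
    _ = M := by rw [integral_bbmG₂, one_mul]

lemma conv_sub_bound {C D : ℝ} (hKm : Measurable Kf) (hKb : ∀ y, |Kf y| ≤ bbmG₂ y)
    (hg : Continuous g) (hM : ∀ x, |g x| ≤ M) (x t : ℝ)
    (hΔ : ∀ z : ℝ, |g (z + t) - g z| ≤ C * D) :
    |(∫ y : ℝ, Kf y * g (x + t - y)) - ∫ y : ℝ, Kf y * g (x - y)| ≤ C * D := by
  have h1 := integrable_kernel_mul hKm hKb hg hM (x + t)
  have h2 := integrable_kernel_mul hKm hKb hg hM x
  rw [← integral_sub h1 h2]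
  have h : ‖∫ y : ℝ, (Kf y * g (x + t - y) - Kf y * g (x - y))‖ ≤ ∫ y : ℝ, bbmG₂ y * (C * D) :=
    norm_integral_le_of_norm_le (integrable_bbmG₂.mul_const _)
      (Filter.Eventually.of_forall fun y => by
        rw [Real.norm_eq_abs, ← mul_sub, abs_mul]
        have hz := hΔ (x - y)
        rw [sub_add_eq_add_sub] at hz
        exact mul_le_mul (hKb y) hz (abs_nonneg _) (bbmG₂_nonneg y))
  rw [Real.norm_eq_abs] at h
  calc _ ≤ ∫ y : ℝ, bbmG₂ y * (C * D) := h
    _ = (∫ y : ℝ, bbmG₂ y) * (C * D) := by rw [integral_mul_const]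
    _ = C * D := by rw [integral_bbmG₂, one_mul]

end KernelBounds


-- FTC for right tails
lemma hasDerivAt_Ioi_integral {h : ℝ → ℝ} (hc : Continuous h)
    (hint : ∀ a : ℝ, IntegrableOn h (Ioi a)) (x : ℝ) :
    HasDerivAt (fun z => ∫ t in Ioi z, h t) (-(h x)) x := by
  set a := x - 1 with ha
  have hx : a < x := by simp [ha]
  have key : ∀ z ∈ Ioi a, (∫ t in Ioi z, h t) = (∫ t in Ioi a, h t) - ∫ t in a..z, h t := by
    intro z hz
    have hz' : a ≤ z := le_of_lt hz
    have hsplit : Ioc a z ∪ Ioi z = Ioi a := Ioc_union_Ioi_eq_Ioi hz'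
    have hdis : Disjoint (Ioc a z) (Ioi z) := by
      rw [Set.disjoint_left]
      rintro t ⟨_, ht2⟩ ht3
      exact absurd ht3 (not_lt.mpr ht2)
    have hu := setIntegral_union hdis measurableSet_Ioi
      ((hint a).mono_set (by rw [← hsplit]; exact subset_union_left)) (hint z)
    rw [hsplit] at hu
    rw [intervalIntegral.integral_of_le hz', hu]
    ring
  have hd2 : HasDerivAt (fun z => (∫ t in Ioi a, h t) - ∫ t in a..z, h t) (-(h x)) x := by
    have := intervalIntegral.integral_hasDerivAt_right (hc.intervalIntegrable a x)
      (hc.stronglyMeasurableAtFilter _ _) hc.continuousAt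
    have h' := (hasDerivAt_const x (∫ t in Ioi a, h t)).sub this
    simp only [zero_sub] at h'
    exact h'
  exact hd2.congr_of_eventuallyEq (Filter.eventually_of_mem (Ioi_mem_nhds hx) key)

noncomputable def auxA (g : ℝ → ℝ) (x : ℝ) : ℝ := ∫ y in Ioi (0:ℝ), Real.exp (-y) * g (x + y)
noncomputable def auxB (g : ℝ → ℝ) (x : ℝ) : ℝ := ∫ y in Ioi (0:ℝ), Real.exp (-y) * g (x - y)

section Aux
variable {g : ℝ → ℝ} {M : ℝ}

lemma integrableOn_exp_mul (hg : Continuous g) (hM : ∀ x, |g x| ≤ M) (a : ℝ) :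
    IntegrableOn (fun t => Real.exp (-t) * g t) (Ioi a) := by
  have h1 : IntegrableOn (fun t => Real.exp (-t)) (Ioi a) := by
    have := exp_neg_integrableOn_Ioi a (b := 1) one_pos
    simpa using this
  refine ((h1.mul_const M).mono'
    ((Real.continuous_exp.comp continuous_neg).mul hg).aestronglyMeasurable.restrict) ?_
  refine Filter.Eventually.of_forall fun t => ?_
  rw [Real.norm_eq_abs, Pi.mul_apply, abs_mul]
  simp only [Function.comp_apply, abs_of_pos (Real.exp_pos _)]
  exact mul_le_mul_of_nonneg_left (hM t) (Real.exp_pos _).le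

lemma auxA_eq (g : ℝ → ℝ) (x : ℝ) :
    auxA g x = Real.exp x * ∫ t in Ioi x, Real.exp (-t) * g t := by
  have A : MeasurableEmbedding fun y : ℝ => y + x :=
    (Homeomorph.addRight x).measurableEmbedding
  have hmap : Measure.map (fun y : ℝ => y + x) volume = volume :=
    map_add_right_eq_self volume x
  have h := A.setIntegral_map (μ := volume) (fun t => Real.exp (-t) * g t) (Ioi x)
  rw [hmap] at h
  have hpre : (fun y : ℝ => y + x) ⁻¹' Ioi x = Ioi 0 := by
    ext y; simp
  rw [hpre] at h
  rw [h]
  rw [← integral_const_mul]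
  unfold auxA
  congr 1
  funext y
  rw [show y + x = x + y from add_comm y x, ← mul_assoc, ← Real.exp_add]
  congr 2
  ring

lemma hasDerivAt_auxA (hg : Continuous g) (hM : ∀ x, |g x| ≤ M) (x : ℝ) :
    HasDerivAt (auxA g) (auxA g x - g x) x := by
  have hψ : HasDerivAt (fun z => ∫ t in Ioi z, Real.exp (-t) * g t)
      (-(Real.exp (-x) * g x)) x :=
    hasDerivAt_Ioi_integral ((Real.continuous_exp.comp continuous_neg).mul hg)
      (integrableOn_exp_mul hg hM) x
  have h := (Real.hasDerivAt_exp x).mul hψ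
  have heq : auxA g = fun z => Real.exp z * ∫ t in Ioi z, Real.exp (-t) * g t :=
    funext fun z => auxA_eq g z
  rw [heq]
  refine h.congr_deriv ?_
  beta_reduce
  have h2 : rexp x * (rexp (-x) * g x) = g x := by
    rw [← mul_assoc, ← Real.exp_add]; simp
  rw [mul_neg, h2]
  ring

lemma auxB_eq (g : ℝ → ℝ) : auxB g = fun x => auxA (fun t => g (-t)) (-x) := by
  funext x
  unfold auxA auxB
  congr 1
  funext y
  congr 1
  ring

lemma hasDerivAt_auxB (hg : Continuous g) (hM : ∀ x, |g x| ≤ M) (x : ℝ) :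
    HasDerivAt (auxB g) (-(auxB g x) + g x) x := by
  have hA := hasDerivAt_auxA (g := fun t => g (-t)) (M := M)
    (hg.comp continuous_neg) (fun t => hM (-t)) (-x)
  have h := hA.comp x (hasDerivAt_neg x)
  rw [auxB_eq g]
  refine h.congr_deriv ?_
  have h1 : auxA (fun t => g (-t)) (-x) = auxB g x := by rw [auxB_eq g]
  simp only [h1, neg_neg]
  ring

lemma split_integral (f : ℝ → ℝ) (hf : Integrable f) :
    ∫ y : ℝ, f y = (∫ y in Iic (0:ℝ), f y) + ∫ y in Ioi (0:ℝ), f y :=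
  (intervalIntegral.integral_Iic_add_Ioi hf.integrableOn hf.integrableOn).symm

lemma Iic_reflect (f : ℝ → ℝ) : (∫ y in Iic (0:ℝ), f (-y)) = ∫ y in Ioi (0:ℝ), f y := by
  simpa using integral_comp_neg_Iic (0:ℝ) f


section ConvEq
variable {g : ℝ → ℝ} {M : ℝ}

lemma convK_eq (hg : Continuous g) (hM : ∀ x, |g x| ≤ M) (x : ℝ) :
    (∫ y : ℝ, bbmK y * g (x - y)) = (auxA g x - auxB g x) / 2 := by
  have hint := integrable_kernel_mul measurable_bbmK abs_bbmK_le hg hM x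
  rw [split_integral _ hint]
  have hIic : (∫ y in Iic (0:ℝ), bbmK y * g (x - y)) = auxA g x * (1/2) := by
    rw [integral_Iic_eq_integral_Iio]
    have h2 : (∫ y in Iio (0:ℝ), bbmK y * g (x - y))
        = ∫ y in Iio (0:ℝ), (fun u => Real.exp (-u) * g (x + u) * (1/2)) (-y) := by
      refine setIntegral_congr_fun measurableSet_Iio fun y hy => ?_
      have hy' : (y:ℝ) < 0 := hy
      show -Real.sign y * Real.exp (-|y|) / 2 * g (x - y)
          = Real.exp (-(-y)) * g (x + -y) * (1/2)
      rw [Real.sign_of_neg hy', abs_of_neg hy', ← sub_eq_add_neg, neg_neg]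
      ring
    rw [h2, ← integral_Iic_eq_integral_Iio,
      Iic_reflect (fun u => Real.exp (-u) * g (x + u) * (1/2)), integral_mul_const]
    rfl
  have hIoi : (∫ y in Ioi (0:ℝ), bbmK y * g (x - y)) = auxB g x * (-(1/2)) := by
    have h2 : (∫ y in Ioi (0:ℝ), bbmK y * g (x - y))
        = ∫ y in Ioi (0:ℝ), Real.exp (-y) * g (x - y) * (-(1/2)) := by
      refine setIntegral_congr_fun measurableSet_Ioi fun y hy => ?_
      have hy' : (0:ℝ) < y := hy
      show -Real.sign y * Real.exp (-|y|) / 2 * g (x - y)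
          = Real.exp (-y) * g (x - y) * (-(1/2))
      rw [Real.sign_of_pos hy', abs_of_pos hy']
      ring
    rw [h2, integral_mul_const]
    rfl
  rw [hIic, hIoi]
  ring

lemma convG_eq (hg : Continuous g) (hM : ∀ x, |g x| ≤ M) (x : ℝ) :
    (∫ y : ℝ, bbmG₂ y * g (x - y)) = (auxA g x + auxB g x) / 2 := by
  have hint := integrable_kernel_mul continuous_bbmG₂.measurable
    (fun y => le_of_eq (abs_of_nonneg (bbmG₂_nonneg y))) hg hM x
  rw [split_integral _ hint]
  have hIic : (∫ y in Iic (0:ℝ), bbmG₂ y * g (x - y)) = auxA g x * (1/2) := by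
    rw [integral_Iic_eq_integral_Iio]
    have h2 : (∫ y in Iio (0:ℝ), bbmG₂ y * g (x - y))
        = ∫ y in Iio (0:ℝ), (fun u => Real.exp (-u) * g (x + u) * (1/2)) (-y) := by
      refine setIntegral_congr_fun measurableSet_Iio fun y hy => ?_
      have hy' : (y:ℝ) < 0 := hy
      show Real.exp (-|y|) / 2 * g (x - y) = Real.exp (-(-y)) * g (x + -y) * (1/2)
      rw [abs_of_neg hy', ← sub_eq_add_neg, neg_neg]
      ring
    rw [h2, ← integral_Iic_eq_integral_Iio,
      Iic_reflect (fun u => Real.exp (-u) * g (x + u) * (1/2)), integral_mul_const]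
    rfl
  have hIoi : (∫ y in Ioi (0:ℝ), bbmG₂ y * g (x - y)) = auxB g x * (1/2) := by
    have h2 : (∫ y in Ioi (0:ℝ), bbmG₂ y * g (x - y))
        = ∫ y in Ioi (0:ℝ), Real.exp (-y) * g (x - y) * (1/2) := by
      refine setIntegral_congr_fun measurableSet_Ioi fun y hy => ?_
      have hy' : (0:ℝ) < y := hy
      show Real.exp (-|y|) / 2 * g (x - y) = Real.exp (-y) * g (x - y) * (1/2)
      rw [abs_of_pos hy']
      ring
    rw [h2, integral_mul_const]
    rfl
  rw [hIic, hIoi]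
  ring

lemma hasDerivAt_convK (hg : Continuous g) (hM : ∀ x, |g x| ≤ M) (x : ℝ) :
    HasDerivAt (fun z => ∫ y : ℝ, bbmK y * g (z - y))
      ((∫ y : ℝ, bbmG₂ y * g (x - y)) - g x) x := by
  have hA := hasDerivAt_auxA hg hM x
  have hB := hasDerivAt_auxB hg hM x
  have h := (hA.sub hB).div_const 2
  have heq : (fun z => ∫ y : ℝ, bbmK y * g (z - y)) = fun z => (auxA g z - auxB g z) / 2 :=
    funext fun z => convK_eq hg hM z
  rw [heq]
  refine h.congr_deriv ?_
  rw [convG_eq hg hM x]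
  ring

lemma hasDerivAt_convG (hg : Continuous g) (hM : ∀ x, |g x| ≤ M) (x : ℝ) :
    HasDerivAt (fun z => ∫ y : ℝ, bbmG₂ y * g (z - y))
      (∫ y : ℝ, bbmK y * g (x - y)) x := by
  have hA := hasDerivAt_auxA hg hM x
  have hB := hasDerivAt_auxB hg hM x
  have h := (hA.add hB).div_const 2
  have heq : (fun z => ∫ y : ℝ, bbmG₂ y * g (z - y)) = fun z => (auxA g z + auxB g z) / 2 :=
    funext fun z => convG_eq hg hM z
  rw [heq]
  refine h.congr_deriv ?_
  rw [convK_eq hg hM x]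
  ring

end ConvEq

section Comm
open Filter

lemma hasDerivAt_conv_comm {Kf : ℝ → ℝ} (hKm : Measurable Kf) (hKb : ∀ y, |Kf y| ≤ bbmG₂ y)
    {g g' : ℝ → ℝ} (hgd : ∀ z, HasDerivAt g (g' z) z) (hg'c : Continuous g')
    {M M' : ℝ} (hM : ∀ z, |g z| ≤ M) (hM' : ∀ z, |g' z| ≤ M') (x : ℝ) :
    HasDerivAt (fun z => ∫ y : ℝ, Kf y * g (z - y)) (∫ y : ℝ, Kf y * g' (x - y)) x := by
  have hgc : Continuous g := by
    have : Differentiable ℝ g := fun z => (hgd z).differentiableAt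
    exact this.continuous
  have main := hasDerivAt_integral_of_dominated_loc_of_deriv_le
    (μ := (volume : Measure ℝ)) (x₀ := x)
    (F := fun z y => Kf y * g (z - y)) (F' := fun z y => Kf y * g' (z - y))
    (bound := fun y => bbmG₂ y * M') (Metric.ball_mem_nhds x one_pos)
    (Eventually.of_forall fun z =>
      (hKm.aestronglyMeasurable.mul
        ((hgc.comp (continuous_const.sub continuous_id)).aestronglyMeasurable)))
    (integrable_kernel_mul hKm hKb hgc hM x)
    (hKm.aestronglyMeasurable.mul
      ((hg'c.comp (continuous_const.sub continuous_id)).aestronglyMeasurable))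
    (Eventually.of_forall fun y => fun z _ => by
      rw [Real.norm_eq_abs, abs_mul]
      exact mul_le_mul (hKb y) (hM' _) (abs_nonneg _) (bbmG₂_nonneg y))
    (integrable_bbmG₂.mul_const M')
    (Eventually.of_forall fun y => fun z _ => by
      have h := ((hgd (z - y)).comp z ((hasDerivAt_id z).sub_const y)).const_mul (Kf y)
      simpa using h)
  exact main.2

end Comm

lemma contDiff_nat_succ_iff_deriv (n : ℕ) (f : ℝ → ℝ) :
    ContDiff ℝ ((n+1 : ℕ) : ℕ∞) f ↔ Differentiable ℝ f ∧ ContDiff ℝ (n : ℕ∞) (deriv f) := by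
  rw [show (((n+1 : ℕ) : ℕ∞) : WithTop ℕ∞) = ((n : ℕ∞) : WithTop ℕ∞) + 1 by push_cast; rfl]
  rw [contDiff_succ_iff_deriv]
  constructor
  · rintro ⟨h1, _, h3⟩; exact ⟨h1, h3⟩
  · rintro ⟨h1, h3⟩; exact ⟨h1, fun h => absurd h (by simp), h3⟩

lemma deriv_convK {g : ℝ → ℝ} {M : ℝ} (hg : Continuous g) (hM : ∀ x, |g x| ≤ M) :
    deriv (fun z => ∫ y : ℝ, bbmK y * g (z - y))
      = fun x => (∫ y : ℝ, bbmG₂ y * g (x - y)) - g x :=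
  funext fun x => (hasDerivAt_convK hg hM x).deriv

lemma deriv_convG {g : ℝ → ℝ} {M : ℝ} (hg : Continuous g) (hM : ∀ x, |g x| ≤ M) :
    deriv (fun z => ∫ y : ℝ, bbmG₂ y * g (z - y))
      = fun x => ∫ y : ℝ, bbmK y * g (x - y) :=
  funext fun x => (hasDerivAt_convG hg hM x).deriv

lemma contDiff_conv (n : ℕ) :
    ∀ (g : ℝ → ℝ) (M : ℝ), Continuous g → (∀ x, |g x| ≤ M) → ContDiff ℝ (n : ℕ∞) g →
    ContDiff ℝ ((n+1 : ℕ) : ℕ∞) (fun z => ∫ y : ℝ, bbmK y * g (z - y)) ∧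
    ContDiff ℝ ((n+1 : ℕ) : ℕ∞) (fun z => ∫ y : ℝ, bbmG₂ y * g (z - y)) := by
  induction n with
  | zero =>
    intro g M hg hM _
    constructor
    · rw [contDiff_nat_succ_iff_deriv 0, deriv_convK hg hM]
      refine ⟨fun x => (hasDerivAt_convK hg hM x).differentiableAt, ?_⟩
      rw [show (((0:ℕ) : ℕ∞) : WithTop ℕ∞) = 0 by rfl, contDiff_zero]
      have hd : Differentiable ℝ (fun z => ∫ y : ℝ, bbmG₂ y * g (z - y)) :=
        fun x => (hasDerivAt_convG hg hM x).differentiableAt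
      exact hd.continuous.sub hg
    · rw [contDiff_nat_succ_iff_deriv 0, deriv_convG hg hM]
      refine ⟨fun x => (hasDerivAt_convG hg hM x).differentiableAt, ?_⟩
      rw [show (((0:ℕ) : ℕ∞) : WithTop ℕ∞) = 0 by rfl, contDiff_zero]
      have hd : Differentiable ℝ (fun z => ∫ y : ℝ, bbmK y * g (z - y)) :=
        fun x => (hasDerivAt_convK hg hM x).differentiableAt
      exact hd.continuous
  | succ n ih =>
    intro g M hg hM hgC
    have hgC' : ContDiff ℝ (n : ℕ∞) g := hgC.of_le (by exact_mod_cast Nat.le_succ n)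
    obtain ⟨ihK, ihG⟩ := ih g M hg hM hgC'
    constructor
    · rw [contDiff_nat_succ_iff_deriv (n+1), deriv_convK hg hM]
      exact ⟨fun x => (hasDerivAt_convK hg hM x).differentiableAt, ihG.sub hgC⟩
    · rw [contDiff_nat_succ_iff_deriv (n+1), deriv_convG hg hM]
      exact ⟨fun x => (hasDerivAt_convG hg hM x).differentiableAt, ihK⟩

lemma supNorm_le {f : ℝ → ℝ} {C : ℝ} (h : ∀ x, |f x| ≤ C) : supNorm f ≤ C :=
  ciSup_le h

lemma le_supNorm {f : ℝ → ℝ} {C : ℝ} (h : ∀ x, |f x| ≤ C) (x : ℝ) : |f x| ≤ supNorm f :=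
  le_ciSup ⟨C, by rintro _ ⟨x, rfl⟩; exact h x⟩ x

lemma supNorm_nonneg {f : ℝ → ℝ} {C : ℝ} (h : ∀ x, |f x| ≤ C) : 0 ≤ supNorm f :=
  le_trans (abs_nonneg (f 0)) (le_supNorm h 0)

lemma holderSeminorm_le {k : ℕ} {θ : ℝ} {f : ℝ → ℝ} {C : ℝ} (hC : 0 ≤ C)
    (h : ∀ x t : ℝ, t ≠ 0 → |iteratedDeriv k f (x + t) - iteratedDeriv k f x| ≤ C * |t| ^ θ) :
    holderSeminorm k θ f ≤ C := by
  have : Nonempty {h : ℝ // h ≠ 0} := ⟨⟨1, one_ne_zero⟩⟩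
  refine ciSup_le fun t => ciSup_le fun x => ?_
  have ht : (0:ℝ) < |(t:ℝ)| ^ θ := Real.rpow_pos_of_pos (abs_pos.mpr t.2) θ
  rw [div_le_iff₀ ht]
  exact h x t t.2

lemma le_holderSeminorm {k : ℕ} {θ : ℝ} {f : ℝ → ℝ} {C : ℝ}
    (h : ∀ x y : ℝ, |iteratedDeriv k f x - iteratedDeriv k f y| ≤ C * |x - y| ^ θ)
    (x t : ℝ) (ht : t ≠ 0) :
    |iteratedDeriv k f (x + t) - iteratedDeriv k f x| / |t| ^ θ ≤ holderSeminorm k θ f := by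
  have hbdd : BddAbove (Set.range fun p : {h : ℝ // h ≠ 0} =>
      ⨆ x : ℝ, |iteratedDeriv k f (x + ↑p) - iteratedDeriv k f x| / |(p : ℝ)| ^ θ) := by
    refine ⟨C, ?_⟩
    rintro _ ⟨s, rfl⟩
    refine ciSup_le fun z => ?_
    have hs : (0:ℝ) < |(s:ℝ)| ^ θ := Real.rpow_pos_of_pos (abs_pos.mpr s.2) θ
    rw [div_le_iff₀ hs]
    have := h (z + (s:ℝ)) z
    simpa using this
  have h1 : (⨆ z : ℝ, |iteratedDeriv k f (z + t) - iteratedDeriv k f z| / |t| ^ θ)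
      ≤ holderSeminorm k θ f := le_ciSup hbdd (⟨t, ht⟩ : {h : ℝ // h ≠ 0})
  refine le_trans ?_ h1
  refine le_ciSup (f := fun z : ℝ => |iteratedDeriv k f (z + t) - iteratedDeriv k f z| / |t| ^ θ)
    ⟨C, ?_⟩ x
  rintro _ ⟨z, rfl⟩
  have hs : (0:ℝ) < |t| ^ θ := Real.rpow_pos_of_pos (abs_pos.mpr ht) θ
  simp only []
  rw [div_le_iff₀ hs]
  simpa using h (z + t) z

lemma holderSeminorm_nonneg {k : ℕ} {θ : ℝ} {f : ℝ → ℝ} {C : ℝ}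
    (h : ∀ x y : ℝ, |iteratedDeriv k f x - iteratedDeriv k f y| ≤ C * |x - y| ^ θ) :
    0 ≤ holderSeminorm k θ f := by
  have := le_holderSeminorm h 0 1 one_ne_zero
  refine le_trans ?_ this
  positivity

lemma iteratedDeriv_convK {k : ℕ} {g : ℝ → ℝ} (hgC : ContDiff ℝ (k : ℕ∞) g)
    (hB : ∀ j ≤ k, ∃ C, ∀ x, |iteratedDeriv j g x| ≤ C) :
    ∀ j ≤ k, iteratedDeriv j (fun z => ∫ y : ℝ, bbmK y * g (z - y))
      = fun z => ∫ y : ℝ, bbmK y * iteratedDeriv j g (z - y) := by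
  intro j
  induction j with
  | zero => intro _; simp [iteratedDeriv_zero]
  | succ j ih =>
    intro hj
    have hj' : j ≤ k := le_of_lt (Nat.lt_of_succ_le hj)
    rw [iteratedDeriv_succ, ih hj']
    obtain ⟨Mj, hMj⟩ := hB j hj'
    obtain ⟨Mj1, hMj1⟩ := hB (j+1) hj
    have hd : Differentiable ℝ (iteratedDeriv j g) :=
      hgC.differentiable_iteratedDeriv j (by exact_mod_cast Nat.lt_of_succ_le hj)
    have hdiff : ∀ z, HasDerivAt (iteratedDeriv j g) (iteratedDeriv (j+1) g z) z := by
      intro z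
      have h1 := (hd z).hasDerivAt
      rwa [show iteratedDeriv (j+1) g z = deriv (iteratedDeriv j g) z by
        rw [iteratedDeriv_succ]]
    have hcont : Continuous (iteratedDeriv (j+1) g) :=
      hgC.continuous_iteratedDeriv (j+1) (by exact_mod_cast hj)
    funext x
    exact (hasDerivAt_conv_comm measurable_bbmK abs_bbmK_le hdiff hcont hMj hMj1 x).deriv

end Aux
end BBMAux

/-- Smoothing of `∂ₓ(1-∂ₓ²)^{-1} = K ∗ ·` in Hölder classes: there is `c = c(k,θ) > 0` such
that for every `g ∈ C^{k,θ}(ℝ)`, one has `K ∗ g ∈ C^{k+1,θ}(ℝ)`,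
`(K ∗ g)′ = G₂ ∗ g - g` everywhere, and `‖K ∗ g‖_{C^{k+1,θ}} ≤ c ‖g‖_{C^{k,θ}}`. -/
theorem holder_bbmK_convolution_smoothing (k : ℕ) (θ : ℝ) (hθ0 : 0 ≤ θ) (hθ1 : θ ≤ 1) :
    ∃ c : ℝ, 0 < c ∧ ∀ g : ℝ → ℝ, MemHolderClass k θ g →
      MemHolderClass (k + 1) θ (fun x => ∫ y : ℝ, bbmK y * g (x - y)) ∧
      (∀ x : ℝ, HasDerivAt (fun x => ∫ y : ℝ, bbmK y * g (x - y))
        ((∫ y : ℝ, bbmG₂ y * g (x - y)) - g x) x) ∧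
      holderNorm (k + 1) θ (fun x => ∫ y : ℝ, bbmK y * g (x - y)) ≤
        c * holderNorm k θ g := by
  refine ⟨3, by norm_num, fun g hg => ?_⟩
  obtain ⟨hgC, hB, ⟨Cθ, hCθ⟩⟩ := hg
  have hgc : Continuous g := hgC.continuous
  have hsup : ∀ j ≤ k, ∀ x, |iteratedDeriv j g x| ≤ supNorm (iteratedDeriv j g) := by
    intro j hj x
    obtain ⟨C, hC⟩ := hB j hj
    exact le_supNorm hC x
  have hg_bound : ∀ x, |g x| ≤ supNorm (iteratedDeriv 0 g) := by
    intro x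
    have := hsup 0 (Nat.zero_le k) x
    rwa [iteratedDeriv_zero] at this
  set Fd := fun z : ℝ => ∫ y : ℝ, bbmK y * g (z - y) with hFd
  set gk := iteratedDeriv k g with hgk
  have hgkc : Continuous gk := hgC.continuous_iteratedDeriv k (by exact_mod_cast le_rfl)
  have hgk_b : ∀ x, |gk x| ≤ supNorm gk := hsup k le_rfl
  set hs := holderSeminorm k θ g with hhs
  have hs0 : 0 ≤ hs := holderSeminorm_nonneg hCθ
  have hseminorm_b : ∀ x t : ℝ, |gk (x + t) - gk x| ≤ hs * |t| ^ θ := by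
    intro x t
    by_cases ht : t = 0
    · simp only [ht, add_zero, sub_self, abs_zero]
      positivity
    · have h1 := le_holderSeminorm hCθ x t ht
      have ht' : (0:ℝ) < |t| ^ θ := Real.rpow_pos_of_pos (abs_pos.mpr ht) θ
      rw [div_le_iff₀ ht'] at h1
      exact h1
  have hF_iter : ∀ j ≤ k, iteratedDeriv j Fd
      = fun z => ∫ y : ℝ, bbmK y * iteratedDeriv j g (z - y) :=
    iteratedDeriv_convK hgC hB
  have hGb : ∀ y, |bbmG₂ y| ≤ bbmG₂ y := fun y => le_of_eq (abs_of_nonneg (bbmG₂_nonneg y))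
  have htop : iteratedDeriv (k+1) Fd = fun x => (∫ y : ℝ, bbmG₂ y * gk (x - y)) - gk x := by
    rw [iteratedDeriv_succ, hF_iter k le_rfl, deriv_convK hgkc hgk_b]
  have hFj : ∀ j ≤ k, ∀ x, |iteratedDeriv j Fd x| ≤ supNorm (iteratedDeriv j g) := by
    intro j hj x
    rw [hF_iter j hj]
    exact abs_integral_kernel_mul measurable_bbmK abs_bbmK_le
      (hgC.continuous_iteratedDeriv j (by exact_mod_cast hj)) (hsup j hj) x
  have hFtop : ∀ x, |iteratedDeriv (k+1) Fd x| ≤ 2 * supNorm gk := by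
    intro x
    rw [htop]
    have h1 : |∫ y : ℝ, bbmG₂ y * gk (x - y)| ≤ supNorm gk :=
      abs_integral_kernel_mul continuous_bbmG₂.measurable hGb hgkc hgk_b x
    have h2 := hgk_b x
    calc |(∫ y : ℝ, bbmG₂ y * gk (x - y)) - gk x|
        ≤ |∫ y : ℝ, bbmG₂ y * gk (x - y)| + |gk x| := abs_sub _ _
      _ ≤ 2 * supNorm gk := by linarith
  have hFhol : ∀ x t : ℝ, |iteratedDeriv (k+1) Fd (x + t) - iteratedDeriv (k+1) Fd x|
      ≤ 2 * hs * |t| ^ θ := by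
    intro x t
    rw [htop]
    have h1 : |(∫ y : ℝ, bbmG₂ y * gk (x + t - y)) - ∫ y : ℝ, bbmG₂ y * gk (x - y)|
        ≤ hs * |t| ^ θ :=
      conv_sub_bound continuous_bbmG₂.measurable hGb hgkc hgk_b x t
        (fun z => hseminorm_b z t)
    have h2 : |gk (x + t) - gk x| ≤ hs * |t| ^ θ := hseminorm_b x t
    calc |((∫ y : ℝ, bbmG₂ y * gk (x + t - y)) - gk (x + t))
          - ((∫ y : ℝ, bbmG₂ y * gk (x - y)) - gk x)|
        = |((∫ y : ℝ, bbmG₂ y * gk (x + t - y)) - ∫ y : ℝ, bbmG₂ y * gk (x - y))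
            - (gk (x + t) - gk x)| := by congr 1; ring
      _ ≤ |(∫ y : ℝ, bbmG₂ y * gk (x + t - y)) - ∫ y : ℝ, bbmG₂ y * gk (x - y)|
            + |gk (x + t) - gk x| := abs_sub _ _
      _ ≤ 2 * hs * |t| ^ θ := by linarith
  refine ⟨⟨(contDiff_conv k g _ hgc hg_bound hgC).1, ?_, ?_⟩,
    fun x => hasDerivAt_convK hgc hg_bound x, ?_⟩
  · intro j hj
    rcases Nat.lt_succ_iff_lt_or_eq.mp (Nat.lt_succ_of_le hj) with h | h
    · exact ⟨supNorm (iteratedDeriv j g), hFj j (Nat.lt_succ_iff.mp h)⟩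
    · subst h
      exact ⟨2 * supNorm gk, hFtop⟩
  · refine ⟨2 * hs, fun x y => ?_⟩
    have := hFhol y (x - y)
    rwa [add_sub_cancel] at this
  · unfold holderNorm
    have hsum1 : ∑ j ∈ Finset.range (k + 1 + 1), supNorm (iteratedDeriv j Fd)
        = (∑ j ∈ Finset.range (k + 1), supNorm (iteratedDeriv j Fd))
          + supNorm (iteratedDeriv (k+1) Fd) := Finset.sum_range_succ _ _
    have hsum2 : ∑ j ∈ Finset.range (k + 1), supNorm (iteratedDeriv j Fd)
        ≤ ∑ j ∈ Finset.range (k + 1), supNorm (iteratedDeriv j g) := by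
      refine Finset.sum_le_sum fun j hj => ?_
      exact supNorm_le (hFj j (Nat.lt_succ_iff.mp (Finset.mem_range.mp hj)))
    have hsum3 : supNorm (iteratedDeriv (k+1) Fd) ≤ 2 * supNorm gk := supNorm_le hFtop
    have hsem : holderSeminorm (k+1) θ Fd ≤ 2 * hs :=
      holderSeminorm_le (by linarith) (fun x t _ => hFhol x t)
    have hgknn : 0 ≤ supNorm gk := supNorm_nonneg hgk_b
    have hlast : supNorm gk ≤ ∑ j ∈ Finset.range (k + 1), supNorm (iteratedDeriv j g) := by
      refine Finset.single_le_sum (f := fun j => supNorm (iteratedDeriv j g))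
        (fun j hj => ?_) (Finset.self_mem_range_succ k)
      obtain ⟨C, hC⟩ := hB j (Nat.lt_succ_iff.mp (Finset.mem_range.mp hj))
      exact supNorm_nonneg fun x => le_supNorm hC x
    have hsumnn : 0 ≤ ∑ j ∈ Finset.range (k + 1), supNorm (iteratedDeriv j g) :=
      le_trans hgknn hlast
    rw [hsum1]
    unfold holderNorm at *
    linarith
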